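/- Let R and R̄ be two quadrilinear curvature tensors on a finite-dimensional real inner product space related by a projective (geodesic) deformation: R̄(X,Y,Z,W) = R(X,Y,Z,W) + g(X,W)P(Y,Z) − g(Y,W)P(X,Z) for some symmetric bilinear form P. Then for every symmetric bilinear form b, the compatibility defects agree: b(R̄(Y,Z)W,X) + b(R̄(Z,X)W,Y) + b(R̄(X,Y)W,Z) = b(R(Y,Z)W,X) + b(R(Z,X)W,Y) + b(R(X,Y)W,Z). In particular, b is R-compatible if and only if b is R̄-compatible. -/
import Mathlib

open RealInnerProductSpace

/-!
`R` and `R'` (written `R̄` in the paper) are curvature-type tensors on a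
finite-dimensional real inner product space, given in vector-valued form
(`⟪R X Y Z, W⟫` is the quadrilinear form, so raising the last index of
`R̄(X,Y,Z,W) = R(X,Y,Z,W) + g(X,W) P(Y,Z) − g(Y,W) P(X,Z)` gives
`R̄(X,Y)Z = R(X,Y)Z + P(Y,Z) X − P(X,Z) Y`).
-/

/-- Projective (geodesic) deformations preserve the compatibility defect: if
`R̄(X,Y)Z = R(X,Y)Z + P(Y,Z) X − P(X,Z) Y` with `P` symmetric, then for every symmetric
bilinear form `b` the compatibility defects of `R` and `R̄` agree; in particular `b` is
`R`-compatible iff it is `R̄`-compatible. -/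
theorem geodesic_mapping_preserves_compatibility
    {V : Type*} [NormedAddCommGroup V] [InnerProductSpace ℝ V] [FiniteDimensional ℝ V]
    (R R' : V → V → V → V)
    (P : V →ₗ[ℝ] V →ₗ[ℝ] ℝ)
    (hPsymm : ∀ X Y : V, P X Y = P Y X)
    (hrel : ∀ X Y Z : V, R' X Y Z = R X Y Z + P Y Z • X - P X Z • Y)
    (b : V →ₗ[ℝ] V →ₗ[ℝ] ℝ)
    (hbsymm : ∀ X Y : V, b X Y = b Y X) :
    (∀ X Y Z W : V,
      b (R' Y Z W) X + b (R' Z X W) Y + b (R' X Y W) Z =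
        b (R Y Z W) X + b (R Z X W) Y + b (R X Y W) Z) ∧
    ((∀ X Y Z W : V, b (R Y Z W) X + b (R Z X W) Y + b (R X Y W) Z = 0) ↔
      (∀ X Y Z W : V, b (R' Y Z W) X + b (R' Z X W) Y + b (R' X Y W) Z = 0)) := by
  have key : ∀ X Y Z W : V,
      b (R' Y Z W) X + b (R' Z X W) Y + b (R' X Y W) Z =
        b (R Y Z W) X + b (R Z X W) Y + b (R X Y W) Z := by
    intro X Y Z W
    simp only [hrel, map_add, map_sub, map_smul, LinearMap.add_apply, LinearMap.sub_apply,
      LinearMap.smul_apply, smul_eq_mul]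
    rw [hbsymm Y X, hbsymm Z X, hbsymm Z Y]
    ring
  refine ⟨key, ?_⟩
  constructor <;> intro h X Y Z W
  · rw [key]; exact h X Y Z W
  · rw [← key]; exact h X Y Z W
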